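/- The function γ(η) = (η/(η+1)) exp((i/(3π)) ln²(η+1)), η > 0, belongs to L∞((0,∞)) (indeed |γ(η)| ≤ 1) but does not belong to VSO((0,∞)): there exist sequences t_n, t'_n > 0 with t'_n/t_n → 1 but |γ(t_n) − γ(t'_n)| not tending to 0. -/

import Mathlib

open Filter Real

def VSO (φ : ℝ → ℂ) : Prop :=
  ∀ ε > (0:ℝ), ∃ δ > (0:ℝ), ∀ t t' : ℝ, 0 < t → 0 < t' →
    |t' / t - 1| < δ → ‖φ t - φ t'‖ < ε

noncomputable def gam : ℝ → ℂ := fun η =>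
  ((η / (η + 1) : ℝ) : ℂ) *
    Complex.exp ((Complex.I / (3 * Real.pi)) * ((Real.log (η + 1) : ℂ)) ^ 2)

lemma norm_exp_one (x : ℝ) :
    ‖Complex.exp ((Complex.I / (3 * Real.pi)) * ((x : ℂ)) ^ 2)‖ = 1 := by
  have h : (Complex.I / (3 * Real.pi)) * ((x : ℂ)) ^ 2
      = ((x ^ 2 / (3 * Real.pi) : ℝ) : ℂ) * Complex.I := by
    push_cast; ring
  rw [h, Complex.norm_exp_ofReal_mul_I]

lemma gam_norm (η : ℝ) (hη : 0 < η) : ‖gam η‖ = η / (η + 1) := by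
  rw [gam, norm_mul, norm_exp_one, mul_one, Complex.norm_real, Real.norm_eq_abs,
    abs_of_nonneg (by positivity)]

lemma gam_exp (a : ℝ) (ha : 0 < a) :
    gam (Real.exp a - 1) = (((Real.exp a - 1) / Real.exp a : ℝ) : ℂ) *
      Complex.exp ((Complex.I / (3 * Real.pi)) * ((a : ℂ)) ^ 2) := by
  have h1 : Real.exp a - 1 + 1 = Real.exp a := by ring
  rw [gam]
  simp only [h1, Real.log_exp]

lemma phase_flip (a s : ℝ) (hs2 : s ^ 2 = a ^ 2 + 3 * Real.pi ^ 2) :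
    Complex.exp ((Complex.I / (3 * Real.pi)) * ((s : ℂ)) ^ 2)
      = - Complex.exp ((Complex.I / (3 * Real.pi)) * ((a : ℂ)) ^ 2) := by
  have hπ : (Real.pi : ℂ) ≠ 0 := by exact_mod_cast Real.pi_ne_zero
  have h : (Complex.I / (3 * Real.pi)) * ((s : ℂ)) ^ 2
      = (Complex.I / (3 * Real.pi)) * ((a : ℂ)) ^ 2 + Real.pi * Complex.I := by
    have : ((s : ℂ)) ^ 2 = ((a : ℂ)) ^ 2 + 3 * (Real.pi : ℂ) ^ 2 := by
      exact_mod_cast congrArg (fun x : ℝ => (x : ℂ)) hs2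
    rw [this]; field_simp
  rw [h, Complex.exp_add, Complex.exp_pi_mul_I]; ring

noncomputable def aseq (n : ℕ) : ℝ := (n : ℝ) + 1
noncomputable def sseq (n : ℕ) : ℝ := Real.sqrt ((aseq n) ^ 2 + 3 * Real.pi ^ 2)

lemma aseq_pos (n : ℕ) : 0 < aseq n := by unfold aseq; positivity
lemma aseq_ge_one (n : ℕ) : 1 ≤ aseq n := by
  unfold aseq; linarith [Nat.cast_nonneg (α := ℝ) n]

lemma sseq_sq (n : ℕ) : (sseq n) ^ 2 = (aseq n) ^ 2 + 3 * Real.pi ^ 2 := by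
  unfold sseq
  rw [Real.sq_sqrt]
  positivity

lemma aseq_le_sseq (n : ℕ) : aseq n ≤ sseq n := by
  unfold sseq
  refine (Real.le_sqrt (aseq_pos n).le (by positivity)).mpr ?_
  nlinarith [Real.pi_pos]

lemma sseq_pos (n : ℕ) : 0 < sseq n := lt_of_lt_of_le (aseq_pos n) (aseq_le_sseq n)

lemma diff_to_zero : Tendsto (fun n => sseq n - aseq n) atTop (nhds 0) := by
  have hG : Tendsto (fun n : ℕ => 3 * Real.pi ^ 2 / ((n : ℝ) + 1)) atTop (nhds 0) :=
    Tendsto.div_atTop tendsto_const_nhds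
      (tendsto_atTop_add_const_right atTop 1 tendsto_natCast_atTop_atTop)
  refine squeeze_zero (fun n => by nlinarith [aseq_le_sseq n]) (fun n => ?_) hG
  have hkey : (sseq n - aseq n) * (sseq n + aseq n) = 3 * Real.pi ^ 2 := by
    nlinarith [sseq_sq n]
  show sseq n - aseq n ≤ 3 * Real.pi ^ 2 / aseq n
  rw [le_div_iff₀ (aseq_pos n)]
  nlinarith [aseq_le_sseq n, aseq_pos n]

lemma one_lt_exp_aseq (n : ℕ) : 1 < Real.exp (aseq n) := by
  nlinarith [Real.add_one_le_exp (aseq n), aseq_ge_one n]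

lemma ratio_to_one :
    Tendsto (fun n => (Real.exp (sseq n) - 1) / (Real.exp (aseq n) - 1)) atTop (nhds 1) := by
  have h1 : Tendsto (fun n => Real.exp (sseq n - aseq n) - 1) atTop (nhds 0) := by
    have := (Real.continuous_exp.tendsto 0).comp diff_to_zero
    simpa [Real.exp_zero] using this.sub_const 1
  have hA : Tendsto (fun n : ℕ => Real.exp (aseq n)) atTop atTop :=
    Real.tendsto_exp_atTop.comp (tendsto_atTop_add_const_right atTop 1 tendsto_natCast_atTop_atTop)
  have hB : Tendsto (fun n : ℕ => Real.exp (aseq n) - 1) atTop atTop := by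
    simpa [sub_eq_add_neg] using tendsto_atTop_add_const_right atTop (-1 : ℝ) hA
  have hinv : Tendsto (fun n : ℕ => (Real.exp (aseq n) - 1)⁻¹) atTop (nhds 0) :=
    hB.inv_tendsto_atTop
  have h2 : Tendsto (fun n => Real.exp (aseq n) / (Real.exp (aseq n) - 1)) atTop (nhds 1) := by
    have heq : ∀ n, Real.exp (aseq n) / (Real.exp (aseq n) - 1)
        = 1 + (Real.exp (aseq n) - 1)⁻¹ := by
      intro n
      have hne : Real.exp (aseq n) - 1 ≠ 0 := by linarith [one_lt_exp_aseq n]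
      field_simp
      ring
    simp only [heq]
    simpa using tendsto_const_nhds.add hinv
  have heq : ∀ n, (Real.exp (sseq n) - 1) / (Real.exp (aseq n) - 1)
      = 1 + (Real.exp (sseq n - aseq n) - 1) * (Real.exp (aseq n) / (Real.exp (aseq n) - 1)) := by
    intro n
    have hne : Real.exp (aseq n) - 1 ≠ 0 := by linarith [one_lt_exp_aseq n]
    have hs : Real.exp (sseq n - aseq n) * Real.exp (aseq n) = Real.exp (sseq n) := by
      rw [← Real.exp_add]; ring_nf
    field_simp
    linarith [hs]
  simp only [heq]
  simpa using tendsto_const_nhds.add (h1.mul h2)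

lemma half_le_r (x : ℝ) (hx : 1 ≤ x) :
    (1:ℝ)/2 ≤ (Real.exp x - 1) / Real.exp x := by
  have h2 : 2 ≤ Real.exp x := by nlinarith [Real.add_one_le_exp x]
  rw [le_div_iff₀ (Real.exp_pos x)]
  linarith

lemma sseq_ge_one (n : ℕ) : 1 ≤ sseq n := le_trans (aseq_ge_one n) (aseq_le_sseq n)

lemma norm_diff (n : ℕ) :
    1 ≤ ‖gam (Real.exp (aseq n) - 1) - gam (Real.exp (sseq n) - 1)‖ := by
  rw [gam_exp _ (aseq_pos n), gam_exp _ (sseq_pos n),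
    phase_flip (aseq n) (sseq n) (sseq_sq n)]
  set r : ℝ := (Real.exp (aseq n) - 1) / Real.exp (aseq n) with hr
  set r' : ℝ := (Real.exp (sseq n) - 1) / Real.exp (sseq n) with hr'
  have hcomb : (r : ℂ) * Complex.exp ((Complex.I / (3 * Real.pi)) * ((aseq n : ℂ)) ^ 2)
      - (r' : ℂ) * -Complex.exp ((Complex.I / (3 * Real.pi)) * ((aseq n : ℂ)) ^ 2)
      = (((r + r' : ℝ)) : ℂ) * Complex.exp ((Complex.I / (3 * Real.pi)) * ((aseq n : ℂ)) ^ 2) := by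
    push_cast; ring
  rw [hcomb, norm_mul, norm_exp_one, mul_one, Complex.norm_real, Real.norm_eq_abs]
  have h1 := half_le_r _ (aseq_ge_one n)
  have h2 := half_le_r _ (sseq_ge_one n)
  rw [abs_of_nonneg (by linarith)]
  linarith

theorem stmt_11 :
    let γ : ℝ → ℂ := fun η =>
      ((η / (η + 1) : ℝ) : ℂ) *
        Complex.exp ((Complex.I / (3 * Real.pi)) * ((Real.log (η + 1) : ℂ)) ^ 2)
    (∀ η : ℝ, 0 < η → ‖γ η‖ ≤ 1) ∧ ¬ VSO γ ∧
      ∃ t t' : ℕ → ℝ, (∀ n, 0 < t n ∧ 0 < t' n) ∧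
        Tendsto (fun n => t' n / t n) atTop (nhds 1) ∧
        ¬ Tendsto (fun n => ‖γ (t n) - γ (t' n)‖) atTop (nhds 0) := by
  intro γ
  have hγ : γ = gam := rfl
  rw [hγ]
  have htpos : ∀ n, 0 < Real.exp (aseq n) - 1 := fun n => by linarith [one_lt_exp_aseq n]
  have ht'pos : ∀ n, 0 < Real.exp (sseq n) - 1 := fun n => by
    have := Real.exp_le_exp.mpr (aseq_le_sseq n)
    linarith [one_lt_exp_aseq n]
  refine ⟨?_, ?_, ?_⟩
  · intro η hη
    rw [gam_norm η hη]
    rw [div_le_one (by positivity)]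
    linarith
  · intro hV
    obtain ⟨δ, hδ, hδ'⟩ := hV 1 one_pos
    have h2 := ratio_to_one.eventually (Metric.ball_mem_nhds (1:ℝ) hδ)
    obtain ⟨n, hn⟩ := h2.exists
    rw [Real.dist_eq] at hn
    have := hδ' _ _ (htpos n) (ht'pos n) hn
    linarith [norm_diff n]
  · refine ⟨fun n => Real.exp (aseq n) - 1, fun n => Real.exp (sseq n) - 1,
      fun n => ⟨htpos n, ht'pos n⟩, ratio_to_one, ?_⟩
    intro h
    have h2 := h.eventually (gt_mem_nhds (by norm_num : (0:ℝ) < 1))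
    obtain ⟨n, hn⟩ := h2.exists
    linarith [norm_diff n]
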